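/- Let λ ≤ 2^ℵ₀ be an uncountable regular cardinal and let (X_α)_{α<λ} be nonempty discrete topological spaces with |X_α| < λ for each α < λ and sup_{α<λ} |X_α| = λ. If the product space ∏_{α<λ} X_α contains no closed discrete subset of cardinality λ, then ∏_{α<λ} X_α is not e-separable. -/

import Mathlib

open Cardinal Set

universe u

/-- A subset `D` of a topological space is closed discrete iff it is closed and
its subspace topology is discrete. -/
def ClosedDiscrete {X : Type u} [TopologicalSpace X] (D : Set X) : Prop :=
  IsClosed D ∧ DiscreteTopology D

/-- A space is `e`-separable iff it has a dense set which is a countable union of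
closed discrete sets. -/
def ESeparable (X : Type u) [TopologicalSpace X] : Prop :=
  ∃ D : ℕ → Set X, (∀ n, ClosedDiscrete (D n)) ∧ Dense (⋃ n, D n)

/-- The density of a space: the least cardinality of a dense subset. -/
noncomputable def density (X : Type u) [TopologicalSpace X] : Cardinal.{u} :=
  sInf {c | ∃ D : Set X, Dense D ∧ #D = c}

/-- The extent of a space: the supremum of the cardinalities of closed discrete subsets. -/
noncomputable def extent (X : Type u) [TopologicalSpace X] : Cardinal.{u} :=
  sSup {c | ∃ D : Set X, ClosedDiscrete D ∧ #D = c}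

/-- If `λ ≤ 𝔠` is an uncountable regular cardinal and `(X_α)_{α<λ}` are nonempty
discrete spaces of size `< λ` with supremum of sizes equal to `λ`, and the product
has no closed discrete subset of cardinality `λ`, then the product is not
`e`-separable. -/
theorem not_eSeparable_of_no_large_closedDiscrete (L : Cardinal.{u}) (hL : L ≤ 2 ^ ℵ₀)
    (hreg : L.IsRegular) (hunc : ℵ₀ < L)
    (X : L.out → Type u) [∀ a, TopologicalSpace (X a)] [∀ a, DiscreteTopology (X a)]
    [∀ a, Nonempty (X a)]
    (hsmall : ∀ a, #(X a) < L) (hsup : (⨆ a, #(X a)) = L)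
    (hncd : ¬ ∃ D : Set (∀ a, X a), ClosedDiscrete D ∧ #D = L) :
    ¬ ESeparable (∀ a, X a) := by
  classical
  rintro ⟨D, hcd, hdense⟩
  set U : Set (∀ a, X a) := ⋃ n, D n with hU
  have hproj : ∀ a, #(X a) ≤ #U := by
    intro a
    have hc : Continuous (fun f : ∀ a, X a => f a) := continuous_apply a
    have himg : (fun f : ∀ a, X a => f a) '' U = Set.univ := by
      have h1 : (fun f : ∀ a, X a => f a) '' closure U ⊆
          closure ((fun f : ∀ a, X a => f a) '' U) :=
        image_closure_subset_closure_image hc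
      rw [hdense.closure_eq] at h1
      have h2 : (fun f : ∀ a, X a => f a) '' Set.univ = Set.univ := by
        rw [image_univ]
        exact Set.range_eq_univ.2 fun x => ⟨Function.update (Classical.arbitrary _) a x, by simp⟩
      rw [h2, closure_eq_iff_isClosed.2 (isClosed_discrete _)] at h1
      exact eq_univ_of_univ_subset h1
    calc #(X a) = #((fun f : ∀ a, X a => f a) '' U) := by rw [himg]; exact mk_univ.symm
      _ ≤ #U := mk_image_le
  have hLU : L ≤ #U := by
    calc L = ⨆ a, #(X a) := hsup.symm
      _ ≤ #U := ciSup_le' hproj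
  have hbig : ∃ n, L ≤ #(D n) := by
    by_contra h
    push_neg at h
    have h1 : Cardinal.lift.{0} #U ≤ Cardinal.sum fun n => #(D n) := mk_iUnion_le_sum_mk_lift
    have h2 : Cardinal.sum (fun n => #(D n)) < L :=
      Cardinal.sum_lt_lift_of_isRegular hreg (by simpa using hunc) h
    rw [Cardinal.lift_uzero] at h1
    exact absurd (hLU.trans h1) (not_le.2 h2)
  obtain ⟨n, hn⟩ := hbig
  obtain ⟨S, hSsub, hScard⟩ := Cardinal.le_mk_iff_exists_subset.1 hn
  refine hncd ⟨S, ?_, hScard⟩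
  have hDn := hcd n
  rw [ClosedDiscrete, ← isDiscrete_iff_discreteTopology, isClosed_and_discrete_iff] at hDn ⊢
  exact fun x => (hDn x).mono_right (Filter.principal_mono.2 hSsub)
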